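/- Let K/F be a finite Galois extension of fields with Galois group Γ, and let n be a positive integer. Then every 1-cocycle c : Γ → GL_n(K) (i.e., a function satisfying c(στ) = c(σ) · σ(c(τ)) for all σ, τ ∈ Γ, where σ acts entrywise on matrices) is a coboundary: there exists b ∈ GL_n(K) such that c(σ) = b · σ(b)⁻¹ for all σ ∈ Γ. -/

import Mathlib

open Matrix Finset

section aux
variable {F K : Type*} [Field F] [Field K] [Algebra F K] [FiniteDimensional F K]

omit [FiniteDimensional F K] in
theorem algEquiv_linearIndependent :
    LinearIndependent K (fun σ : K ≃ₐ[F] K => (σ : K → K)) :=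
  LinearIndependent.comp (ι' := K ≃ₐ[F] K)
    (linearIndependent_monoidHom K K) (fun f => f)
    (fun x y h => by ext; exact DFunLike.ext_iff.1 h _)

end aux

/-- Hilbert's Theorem 90 for `GL n`: every `1`-cocycle of the Galois group of a finite Galois
extension `K/F` valued in `GL n K` is a coboundary. -/
theorem stmt_1 (F K : Type*) [Field F] [Field K] [Algebra F K]
    [IsGalois F K] [FiniteDimensional F K] (n : ℕ) (hn : 0 < n)
    (c : (K ≃ₐ[F] K) → GL (Fin n) K)
    (hc : ∀ σ τ : K ≃ₐ[F] K,
      ((c (σ * τ) : Matrix (Fin n) (Fin n) K))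
        = (c σ : Matrix (Fin n) (Fin n) K) * ((c τ : Matrix (Fin n) (Fin n) K)).map σ) :
    ∃ b : GL (Fin n) K, ∀ σ : K ≃ₐ[F] K,
      (c σ : Matrix (Fin n) (Fin n) K) * ((b : Matrix (Fin n) (Fin n) K).map σ)
        = (b : Matrix (Fin n) (Fin n) K) := by
  classical
  -- c 1 = 1
  have hc1 : ((c 1 : Matrix (Fin n) (Fin n) K)) = 1 := by
    have h := hc 1 1
    rw [mul_one] at h
    have hmap : ((c 1 : Matrix (Fin n) (Fin n) K)).map (1 : K ≃ₐ[F] K) =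
        (c 1 : Matrix (Fin n) (Fin n) K) := by
      ext i j; simp [Matrix.map_apply]
    rw [hmap] at h
    symm
    calc (1 : Matrix (Fin n) (Fin n) K) = ↑(c 1)⁻¹ * ↑(c 1) := by
          rw [← Units.val_mul, inv_mul_cancel, Units.val_one]
      _ = ↑(c 1)⁻¹ * ((c 1 : Matrix (Fin n) (Fin n) K) * (c 1 : Matrix (Fin n) (Fin n) K)) := by
          rw [← h]
      _ = (↑(c 1)⁻¹ * (c 1 : Matrix (Fin n) (Fin n) K)) * (c 1 : Matrix (Fin n) (Fin n) K) := by
          rw [mul_assoc]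
      _ = (c 1 : Matrix (Fin n) (Fin n) K) := by
          rw [← Units.val_mul, inv_mul_cancel, Units.val_one, one_mul]
  -- the averaging map on vectors
  set bv : (Fin n → K) → (Fin n → K) :=
    fun x => ∑ σ : K ≃ₐ[F] K, (c σ : Matrix (Fin n) (Fin n) K).mulVec (fun i => σ (x i)) with hbv
  -- the range of bv spans everything
  have hspan : Submodule.span K (Set.range bv) = ⊤ := by
    by_contra h
    obtain ⟨f, hf0, hker⟩ := Submodule.exists_dual_map_eq_bot_of_lt_top
      (lt_top_iff_ne_top.2 h) inferInstance
    have hfb : ∀ x, f (bv x) = 0 := by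
      intro x
      have : f (bv x) ∈ (Submodule.span K (Set.range bv)).map f :=
        Submodule.mem_map_of_mem (Submodule.subset_span ⟨x, rfl⟩)
      rwa [hker, Submodule.mem_bot] at this
    have key : ∀ x : Fin n → K, ∀ σ : K ≃ₐ[F] K,
        f ((c σ : Matrix (Fin n) (Fin n) K).mulVec (fun i => σ (x i))) = 0 := by
      intro x
      have hli := Fintype.linearIndependent_iff.1 (algEquiv_linearIndependent (F := F) (K := K))
        (fun σ => f ((c σ : Matrix (Fin n) (Fin n) K).mulVec (fun i => σ (x i))))
      refine hli ?_
      funext y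
      have hxy : f (bv (y • x)) = 0 := hfb _
      rw [hbv] at hxy
      simp only [Pi.smul_apply, smul_eq_mul, _root_.map_mul] at hxy
      rw [_root_.map_sum] at hxy
      have : ∀ σ : K ≃ₐ[F] K,
          f ((c σ : Matrix (Fin n) (Fin n) K).mulVec (fun i => σ y * σ (x i)))
            = σ y * f ((c σ : Matrix (Fin n) (Fin n) K).mulVec (fun i => σ (x i))) := by
        intro σ
        have : (fun i => σ y * σ (x i)) = σ y • (fun i => σ (x i)) := by
          funext i; simp [Pi.smul_apply, smul_eq_mul]
        rw [this, Matrix.mulVec_smul, _root_.map_smul, smul_eq_mul]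
      simp only [this] at hxy
      simpa [mul_comm] using hxy
    refine hf0 (LinearMap.ext fun x => ?_)
    simpa [hc1, Matrix.one_mulVec] using key x 1
  -- extract a basis from the spanning set
  obtain ⟨t, hts, htspan, htli⟩ := exists_linearIndependent K (Set.range bv)
  rw [hspan] at htspan
  have hbasis : Module.Basis t K (Fin n → K) := Module.Basis.mk htli (by rw [Subtype.range_coe, htspan])
  haveI : Fintype t := FiniteDimensional.fintypeBasisIndex hbasis
  have hcard : Fintype.card t = n := by
    have h1 := Module.finrank_eq_card_basis hbasis
    have h2 : Module.finrank K (Fin n → K) = n := by simp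
    rw [h2] at h1; exact h1.symm
  obtain e : Fin n ≃ t := (Fintype.equivFinOfCardEq hcard).symm
  choose a ha using fun i : Fin n => hts (e i).2
  set A : Matrix (Fin n) (Fin n) K := Matrix.of fun j i => a i j with hA
  set B : Matrix (Fin n) (Fin n) K :=
    ∑ σ : K ≃ₐ[F] K, (c σ : Matrix (Fin n) (Fin n) K) * A.map σ with hB
  have hcol : ∀ i, Bᵀ i = ((e i : Fin n → K)) := by
    intro i
    funext j
    have := congrFun (ha i) j
    rw [hbv] at this
    simp only [Finset.sum_apply] at this ⊢
    rw [transpose_apply, hB]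
    rw [← this, Matrix.sum_apply]
    refine Finset.sum_congr rfl fun σ _ => ?_
    simp [Matrix.mul_apply, Matrix.map_apply, hA, Matrix.mulVec, dotProduct]
  have hBunit : IsUnit B := by
    rw [← Matrix.linearIndependent_cols_iff_isUnit]
    have : LinearIndependent K (fun i : Fin n => ((e i : Fin n → K))) :=
      htli.comp e (e.injective)
    convert this using 1; exact funext hcol
  refine ⟨hBunit.unit, fun τ => ?_⟩
  rw [IsUnit.unit_spec]
  have hmapB : B.map τ = ∑ σ : K ≃ₐ[F] K,
      ((c σ : Matrix (Fin n) (Fin n) K).map τ) * A.map (τ * σ : K ≃ₐ[F] K) := by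
    ext j k
    rw [hB]
    simp only [Matrix.map_apply, Matrix.sum_apply, _root_.map_sum, Matrix.mul_apply,
      _root_.map_mul, AlgEquiv.mul_apply]
  rw [hmapB, Finset.mul_sum]
  have step : ∀ σ : K ≃ₐ[F] K,
      (c τ : Matrix (Fin n) (Fin n) K) *
          (((c σ : Matrix (Fin n) (Fin n) K)).map τ * A.map (τ * σ : K ≃ₐ[F] K))
        = (c (τ * σ) : Matrix (Fin n) (Fin n) K) * A.map (τ * σ : K ≃ₐ[F] K) := by
    intro σ
    rw [← mul_assoc, ← hc τ σ]
  simp only [step]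
  rw [hB]
  exact Fintype.sum_bijective (fun σ => τ * σ) (Group.mulLeft_bijective τ) _ _ (fun σ => rfl)
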